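/- arXiv:1909.03846 — 2 statements merged into one kernel-verified Lean document; each statement's English description precedes it below -/
import Mathlib

section
/- Let m ≥ 1 and i ≥ 2 be integers. Then there exist real constants 0 < A ≤ B and an integer T ≥ i such that for every t ≥ T, A·ln t ≤ ∑_{l=i}^{t-1} ln(1 + c_l)·∏_{h=l+1}^{t-1}(1 - e_h) ≤ B·ln t. That is, the normalizing sequence ∑_{l=i}^{t-1} ln(1 + c_l)·∏_{h=l+1}^{t-1}(1 - e_h) is Θ(ln t) as t → ∞. -/
/-- `c_l = (2ml+1)/(l(2ml+1-2m))`. -/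
noncomputable def cPAAPA (m l : ℕ) : ℝ :=
  (2 * (m : ℝ) * l + 1) / ((l : ℝ) * (2 * (m : ℝ) * l + 1 - 2 * m))

/-- `e_l = m/(l(2ml+1-2m))`. -/
noncomputable def ePAAPA (m l : ℕ) : ℝ :=
  (m : ℝ) / ((l : ℝ) * (2 * (m : ℝ) * l + 1 - 2 * m))

private lemma paapa_denom_pos {m l : ℕ} (hm : 1 ≤ m) (hl : 2 ≤ l) :
    0 < (l : ℝ) * (2 * (m : ℝ) * l + 1 - 2 * m) := by
  have hm' : (1 : ℝ) ≤ m := by exact_mod_cast hm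
  have hl' : (2 : ℝ) ≤ l := by exact_mod_cast hl
  have h1 : 0 < 2 * (m:ℝ) * l + 1 - 2 * m := by
    nlinarith [mul_nonneg (by linarith : (0:ℝ) ≤ 2 * (m:ℝ)) (by linarith : (0:ℝ) ≤ (l:ℝ) - 1)]
  exact mul_pos (by linarith) h1

private lemma c_lower {m l : ℕ} (hm : 1 ≤ m) (hl : 2 ≤ l) :
    1 / (l : ℝ) ≤ cPAAPA m l := by
  have hm' : (1 : ℝ) ≤ m := by exact_mod_cast hm
  have hl' : (2 : ℝ) ≤ l := by exact_mod_cast hl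
  have hD := paapa_denom_pos hm hl
  rw [cPAAPA, div_le_div_iff₀ (by linarith) hD]
  nlinarith

private lemma c_upper {m l : ℕ} (hm : 1 ≤ m) (hl : 2 ≤ l) :
    cPAAPA m l ≤ 3 / (l : ℝ) := by
  have hm' : (1 : ℝ) ≤ m := by exact_mod_cast hm
  have hl' : (2 : ℝ) ≤ l := by exact_mod_cast hl
  have hD := paapa_denom_pos hm hl
  rw [cPAAPA, div_le_div_iff₀ hD (by linarith)]
  nlinarith [mul_nonneg (by linarith : (0:ℝ) ≤ (m:ℝ)) (by linarith : (0:ℝ) ≤ (l:ℝ) - 2),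
    mul_nonneg (by linarith : (0:ℝ) ≤ (l:ℝ))
      (mul_nonneg (by linarith : (0:ℝ) ≤ (m:ℝ)) (by linarith : (0:ℝ) ≤ (l:ℝ) - 2))]

private lemma e_nonneg {m l : ℕ} (hm : 1 ≤ m) (hl : 2 ≤ l) :
    0 ≤ ePAAPA m l :=
  div_nonneg (by positivity) (paapa_denom_pos hm hl).le

private lemma e_le {m l : ℕ} (hm : 1 ≤ m) (hl : 2 ≤ l) :
    ePAAPA m l ≤ 1 / 2 * (1 / ((l : ℝ) - 1) - 1 / l) := by
  have hm' : (1 : ℝ) ≤ m := by exact_mod_cast hm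
  have hl' : (2 : ℝ) ≤ l := by exact_mod_cast hl
  have hD := paapa_denom_pos hm hl
  have hl0 : (l : ℝ) ≠ 0 := by linarith
  have hl1 : (l : ℝ) - 1 ≠ 0 := by linarith
  have hrw : (1:ℝ) / 2 * (1 / ((l : ℝ) - 1) - 1 / l) = 1 / (2 * ((l:ℝ) - 1) * l) := by
    field_simp
    ring
  rw [hrw, ePAAPA, div_le_div_iff₀ hD (by nlinarith)]
  nlinarith

private lemma e_le_half {m l : ℕ} (hm : 1 ≤ m) (hl : 2 ≤ l) :
    ePAAPA m l ≤ 1 / 2 := by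
  have hl' : (2 : ℝ) ≤ l := by exact_mod_cast hl
  have h := e_le hm hl
  have h1 : 1 / ((l : ℝ) - 1) ≤ 1 := by
    rw [div_le_one (by linarith)]; linarith
  have h2 : 0 < 1 / (l : ℝ) := by positivity
  linarith

/-- Telescoping sum over `Ico`. -/
private lemma tele_sum (f : ℕ → ℝ) (a : ℕ) :
    ∀ b, a ≤ b → ∑ h ∈ Finset.Ico a b, (f (h + 1) - f h) = f b - f a := by
  intro b
  induction b with
  | zero => intro hb; have : a = 0 := Nat.le_zero.mp hb; simp [this]
  | succ n ih =>
    intro hb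
    rcases le_or_gt a n with h | h
    · rw [Finset.sum_Ico_succ_top h, ih h]; ring
    · have : a = n + 1 := le_antisymm hb h
      simp [this]

/-- Weierstrass product inequality over `Ico`. -/
private lemma weier (g : ℕ → ℝ) (a : ℕ) (hg : ∀ h, a ≤ h → 0 ≤ g h ∧ g h ≤ 1) :
    ∀ b, 1 - ∑ h ∈ Finset.Ico a b, g h ≤ ∏ h ∈ Finset.Ico a b, (1 - g h) := by
  intro b
  induction b with
  | zero => simp
  | succ n ih =>
    rcases le_or_gt a n with h | h
    · rw [Finset.sum_Ico_succ_top h, Finset.prod_Ico_succ_top h]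
      have hgn := hg n h
      have hS : 0 ≤ ∑ h ∈ Finset.Ico a n, g h :=
        Finset.sum_nonneg fun x hx => (hg x (Finset.mem_Ico.mp hx).1).1
      nlinarith [mul_nonneg (sub_nonneg.2 ih) (sub_nonneg.2 hgn.2),
        mul_nonneg hS hgn.1]
    · have : Finset.Ico a (n + 1) = ∅ := Finset.Ico_eq_empty (by omega)
      simp [this]

private lemma prod_upper {m : ℕ} (hm : 1 ≤ m) {l : ℕ} (hl : 2 ≤ l) (t : ℕ) :
    ∏ h ∈ Finset.Ico (l + 1) t, (1 - ePAAPA m h) ≤ 1 := by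
  apply Finset.prod_le_one
  · intro h hh
    have hh2 : 2 ≤ h := by have := (Finset.mem_Ico.mp hh).1; omega
    have := e_le_half hm hh2
    linarith
  · intro h hh
    have hh2 : 2 ≤ h := by have := (Finset.mem_Ico.mp hh).1; omega
    have := e_nonneg hm hh2
    linarith

private lemma prod_lower {m : ℕ} (hm : 1 ≤ m) {l : ℕ} (hl : 2 ≤ l) (t : ℕ) :
    (1:ℝ) / 2 ≤ ∏ h ∈ Finset.Ico (l + 1) t, (1 - ePAAPA m h) := by
  have hW := weier (ePAAPA m) (l + 1) (fun h hh => by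
    have hh2 : 2 ≤ h := by omega
    exact ⟨e_nonneg hm hh2, by linarith [e_le_half hm hh2]⟩) t
  have hsum : ∑ h ∈ Finset.Ico (l + 1) t, ePAAPA m h ≤ 1 / 2 := by
    rcases le_or_gt (l + 1) t with hlt | hlt
    · have hstep : ∀ h ∈ Finset.Ico (l + 1) t,
          ePAAPA m h ≤ (-(1/2) * (1 / (((h+1 : ℕ) : ℝ) - 1))) - (-(1/2) * (1 / ((h : ℝ) - 1))) := by
        intro h hh
        have hh2 : 2 ≤ h := by have := (Finset.mem_Ico.mp hh).1; omega
        have := e_le hm hh2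
        push_cast
        have : ePAAPA m h ≤ 1 / 2 * (1 / ((h : ℝ) - 1) - 1 / h) := this
        calc ePAAPA m h ≤ 1 / 2 * (1 / ((h : ℝ) - 1) - 1 / h) := this
          _ = (-(1/2) * (1 / (((h : ℝ) + 1) - 1))) - (-(1/2) * (1 / ((h : ℝ) - 1))) := by
              ring_nf
      have h1 := Finset.sum_le_sum hstep
      rw [tele_sum (fun h => -(1/2) * (1 / ((h : ℝ) - 1))) (l + 1) t hlt] at h1
      have hl' : (2 : ℝ) ≤ l := by exact_mod_cast hl
      have htR : (3 : ℝ) ≤ t := by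
        have : 3 ≤ t := by omega
        exact_mod_cast this
      have hpos1 : 0 < (t : ℝ) - 1 := by linarith
      have hlp : ((l : ℝ) + 1) - 1 = (l : ℝ) := by ring
      have h2 : -(1/2) * (1 / ((t : ℝ) - 1)) ≤ 0 := by
        have : 0 < 1 / ((t : ℝ) - 1) := by positivity
        linarith
      have h3 : -(-(1/2) * (1 / (((l + 1 : ℕ) : ℝ) - 1))) ≤ 1 / 2 := by
        push_cast
        rw [hlp]
        have h4 : 1 / (l : ℝ) ≤ 1 := by rw [div_le_one (by linarith)]; linarith
        have h5 : 0 < 1 / (l : ℝ) := by positivity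
        linarith
      linarith
    · rw [Finset.Ico_eq_empty (by omega)]
      norm_num
  linarith

/-- Remark 3.7 of the paper: the normalizing sequence
`∑_{l=i}^{t-1} ln(1+c_l) ∏_{h=l+1}^{t-1}(1-e_h)` is `Θ(ln t)` as `t → ∞`. -/
theorem pa_apa_normalizer_is_Theta_log (m i : ℕ) (hm : 1 ≤ m) (hi : 2 ≤ i) :
    ∃ A B : ℝ, ∃ T : ℕ, 0 < A ∧ A ≤ B ∧ i ≤ T ∧
      ∀ t, T ≤ t →
        A * Real.log t ≤
          (∑ l ∈ Finset.Ico i t, Real.log (1 + cPAAPA m l) *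
            ∏ h ∈ Finset.Ico (l + 1) t, (1 - ePAAPA m h)) ∧
        (∑ l ∈ Finset.Ico i t, Real.log (1 + cPAAPA m l) *
            ∏ h ∈ Finset.Ico (l + 1) t, (1 - ePAAPA m h)) ≤ B * Real.log t := by
  have hiT : i ≤ i * i := Nat.le_mul_of_pos_left i (by omega)
  refine ⟨1/4, 3, i * i, by norm_num, by norm_num, hiT, ?_⟩
  intro t ht
  have hit : i ≤ t := le_trans hiT ht
  have ht4 : 4 ≤ t := le_trans (by nlinarith : 4 ≤ i * i) ht
  have hi' : (2 : ℝ) ≤ i := by exact_mod_cast hi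
  have ht' : (4 : ℝ) ≤ t := by exact_mod_cast ht4
  have hiit : ((i : ℝ)) * i ≤ t := by
    have := (Nat.cast_le (α := ℝ)).mpr ht
    push_cast at this
    linarith
  constructor
  · -- lower bound
    have hkey : ∀ l ∈ Finset.Ico i t,
        ((1/2) * Real.log ((l + 1 : ℕ) : ℝ) - (1/2) * Real.log l) ≤
          Real.log (1 + cPAAPA m l) * ∏ h ∈ Finset.Ico (l + 1) t, (1 - ePAAPA m h) := by
      intro l hl
      have hl2 : 2 ≤ l := le_trans hi (Finset.mem_Ico.mp hl).1
      have hl' : (2 : ℝ) ≤ l := by exact_mod_cast hl2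
      have hc := c_lower hm hl2
      have hcpos : 0 < cPAAPA m l := lt_of_lt_of_le (by positivity) hc
      have hlog1 : Real.log (((l : ℝ) + 1) / l) ≤ Real.log (1 + cPAAPA m l) := by
        apply Real.log_le_log (by positivity)
        rw [div_le_iff₀ (by linarith)]
        have h1 : (1:ℝ) ≤ cPAAPA m l * l := (div_le_iff₀ (by linarith)).mp hc
        linarith
      have hdiv : Real.log (((l : ℝ) + 1) / l) = Real.log ((l : ℝ) + 1) - Real.log l :=
        Real.log_div (by linarith) (by linarith)
      have hmono : Real.log (l : ℝ) ≤ Real.log ((l : ℝ) + 1) :=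
        Real.log_le_log (by linarith) (by linarith)
      have hLnn : 0 ≤ Real.log (((l : ℝ) + 1) / l) := by rw [hdiv]; linarith
      have hP := prod_lower hm hl2 t
      have := mul_le_mul hlog1 hP (by norm_num) (le_trans hLnn hlog1)
      push_cast
      calc (1/2) * Real.log ((l : ℝ) + 1) - (1/2) * Real.log l
          = Real.log (((l : ℝ) + 1) / l) * (1/2) := by rw [hdiv]; ring
        _ ≤ Real.log (1 + cPAAPA m l) * ∏ h ∈ Finset.Ico (l + 1) t, (1 - ePAAPA m h) := this
    have h1 := Finset.sum_le_sum hkey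
    rw [tele_sum (fun l => (1/2) * Real.log (l : ℝ)) i t hit] at h1
    have hlogi : Real.log ((i : ℝ) * i) ≤ Real.log t :=
      Real.log_le_log (by positivity) hiit
    rw [Real.log_mul (by linarith) (by linarith)] at hlogi
    linarith
  · -- upper bound
    have hkey : ∀ l ∈ Finset.Ico i t,
        Real.log (1 + cPAAPA m l) * ∏ h ∈ Finset.Ico (l + 1) t, (1 - ePAAPA m h) ≤
          (3 * Real.log (((l + 1 : ℕ) : ℝ) - 1) - 3 * Real.log ((l : ℝ) - 1)) := by
      intro l hl
      have hl2 : 2 ≤ l := le_trans hi (Finset.mem_Ico.mp hl).1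
      have hl' : (2 : ℝ) ≤ l := by exact_mod_cast hl2
      have hc := c_lower hm hl2
      have hcu := c_upper hm hl2
      have hcpos : 0 < cPAAPA m l := lt_of_lt_of_le (by positivity) hc
      have hlogc : Real.log (1 + cPAAPA m l) ≤ cPAAPA m l := by
        have := Real.log_le_sub_one_of_pos (show (0:ℝ) < 1 + cPAAPA m l by linarith)
        linarith
      have hlognn : 0 ≤ Real.log (1 + cPAAPA m l) := Real.log_nonneg (by linarith)
      have hP := prod_upper hm hl2 t
      have hPnn : (0:ℝ) ≤ ∏ h ∈ Finset.Ico (l + 1) t, (1 - ePAAPA m h) :=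
        le_trans (by norm_num) (prod_lower hm hl2 t)
      have hterm : Real.log (1 + cPAAPA m l) * ∏ h ∈ Finset.Ico (l + 1) t, (1 - ePAAPA m h) ≤
          Real.log (1 + cPAAPA m l) := by
        nlinarith
      -- 1/l ≤ log l - log (l-1)
      have hfrac : Real.log ((l : ℝ) - 1) - Real.log l ≤ -(1 / l) := by
        have hpos : (0:ℝ) < ((l : ℝ) - 1) / l := div_pos (by linarith) (by linarith)
        have := Real.log_le_sub_one_of_pos hpos
        rw [Real.log_div (by linarith) (by linarith)] at this
        have heq : ((l : ℝ) - 1) / l - 1 = -(1 / l) := by field_simp; ring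
        linarith [heq ▸ this]
      push_cast
      have hgoal : 3 * Real.log (((l : ℝ) + 1) - 1) - 3 * Real.log ((l : ℝ) - 1)
          = 3 * (Real.log l - Real.log ((l : ℝ) - 1)) := by ring_nf
      calc Real.log (1 + cPAAPA m l) * ∏ h ∈ Finset.Ico (l + 1) t, (1 - ePAAPA m h)
          ≤ Real.log (1 + cPAAPA m l) := hterm
        _ ≤ cPAAPA m l := hlogc
        _ ≤ 3 / l := hcu
        _ ≤ 3 * Real.log (((l : ℝ) + 1) - 1) - 3 * Real.log ((l : ℝ) - 1) := by
            rw [hgoal]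
            have : 1 / (l : ℝ) ≤ Real.log l - Real.log ((l : ℝ) - 1) := by linarith
            calc (3:ℝ) / l = 3 * (1 / l) := by ring
              _ ≤ 3 * (Real.log l - Real.log ((l : ℝ) - 1)) := by linarith
    have h1 := Finset.sum_le_sum hkey
    rw [tele_sum (fun l => 3 * Real.log ((l : ℝ) - 1)) i t hit] at h1
    have hlt : Real.log ((t : ℝ) - 1) ≤ Real.log t :=
      Real.log_le_log (by linarith) (by linarith)
    have hli : 0 ≤ Real.log ((i : ℝ) - 1) := Real.log_nonneg (by linarith)
    linarith
end

section
/- Let m ≥ 1 and i ≥ 1 be integers. Let (Ω, F, ℙ) be a probability space with a filtration (F_t)_{t≥i} and let (d_t)_{t≥i} be an adapted, nonnegative process with d_t ≤ 2mt almost surely for every t ≥ i, and such that for every t ≥ i, E[exp(d_{t+1} - d_t) | F_t] ≤ (1 + (e - 1)·c_t)^m almost surely, where e is Euler's number. Then the process W_t := exp(d_t) / ∏_{l=i}^{t-1} (1 + (e-1)·c_l)^m, for t ≥ i, is a nonnegative supermartingale with respect to (F_t), and hence converges almost surely to a nonnegative random variable with finite mean. Moreover, ∑_{l=i}^{t-1}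 ln(1 + (e-1)·c_l) = O(ln t) as t → ∞. -/
open scoped ENNReal


open Filter MeasureTheory

lemma denom_pos {m l : ℕ} (hm : 1 ≤ m) (hl : 1 ≤ l) :
    0 < (l : ℝ) * (2 * (m : ℝ) * l + 1 - 2 * m) := by
  have h1 : (1:ℝ) ≤ m := by exact_mod_cast hm
  have h2 : (1:ℝ) ≤ l := by exact_mod_cast hl
  have h3 : (0:ℝ) ≤ (m:ℝ) * ((l:ℝ) - 1) := mul_nonneg (by linarith) (by linarith)
  have h4 : 2 * (m:ℝ) * l + 1 - 2 * m = 2 * ((m:ℝ) * ((l:ℝ) - 1)) + 1 := by ring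
  rw [h4]
  exact mul_pos (by linarith) (by linarith)

lemma cPAAPA_pos {m l : ℕ} (hm : 1 ≤ m) (hl : 1 ≤ l) : 0 < cPAAPA m l := by
  have h1 : (1:ℝ) ≤ m := by exact_mod_cast hm
  have h2 : (1:ℝ) ≤ l := by exact_mod_cast hl
  exact div_pos (by nlinarith) (denom_pos hm hl)

lemma cPAAPA_le {m l : ℕ} (hm : 1 ≤ m) (hl : 1 ≤ l) :
    cPAAPA m l ≤ (2 * (m:ℝ) + 1) / l := by
  have h1 : (1:ℝ) ≤ m := by exact_mod_cast hm
  have h2 : (1:ℝ) ≤ l := by exact_mod_cast hl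
  rw [cPAAPA, div_le_div_iff₀ (denom_pos hm hl) (by linarith)]
  nlinarith [mul_nonneg (mul_nonneg (by linarith : (0:ℝ) ≤ (m:ℝ)) (by linarith : (0:ℝ) ≤ (m:ℝ))) (by linarith : (0:ℝ) ≤ (l:ℝ) - 1)]

lemma e1_pos : (0:ℝ) < Real.exp 1 - 1 := by
  have := Real.add_one_lt_exp (one_ne_zero)
  linarith

lemma base_one_le {m l : ℕ} (hm : 1 ≤ m) (hl : 1 ≤ l) :
    (1:ℝ) ≤ 1 + (Real.exp 1 - 1) * cPAAPA m l := by
  nlinarith [cPAAPA_pos hm hl, e1_pos]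

lemma base_pos {m l : ℕ} (hm : 1 ≤ m) (hl : 1 ≤ l) :
    0 < (1 + (Real.exp 1 - 1) * cPAAPA m l) ^ m :=
  pow_pos (lt_of_lt_of_le zero_lt_one (base_one_le hm hl)) m


/-- Key steps in the proof of Theorem 3.10 of the paper: the process
`W_t = exp(d_t) / ∏_{l=i}^{t-1} (1 + (e-1) c_l)^m` is a nonnegative supermartingale,
hence converges almost surely to a nonnegative random variable with finite mean;
moreover `∑_{l=i}^{t-1} ln(1 + (e-1) c_l) = O(ln t)`. -/
theorem pa_apa_pure_anti_exp_supermartingale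
    {Ω : Type*} {m0 : MeasurableSpace Ω} (μ : Measure Ω) [IsProbabilityMeasure μ]
    (ℱ : Filtration ℕ m0) (m i : ℕ) (hm : 1 ≤ m) (hi : 1 ≤ i)
    (d : ℕ → Ω → ℝ) (hadapted : Adapted ℱ d)
    (hnonneg : ∀ t, i ≤ t → 0 ≤ᵐ[μ] d t)
    (hbound : ∀ t, i ≤ t → ∀ᵐ ω ∂μ, d t ω ≤ 2 * (m : ℝ) * t)
    (hmgf : ∀ t, i ≤ t →
      μ[fun ω => Real.exp (d (t + 1) ω - d t ω) | ℱ t] ≤ᵐ[μ]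
        fun _ => (1 + (Real.exp 1 - 1) * cPAAPA m t) ^ m) :
    (∀ t, i ≤ t →
      (0 ≤ᵐ[μ] fun ω =>
        Real.exp (d t ω) /
          ∏ l ∈ Finset.Ico i t, (1 + (Real.exp 1 - 1) * cPAAPA m l) ^ m) ∧
      Integrable (fun ω =>
        Real.exp (d t ω) /
          ∏ l ∈ Finset.Ico i t, (1 + (Real.exp 1 - 1) * cPAAPA m l) ^ m) μ ∧
      μ[fun ω =>
          Real.exp (d (t + 1) ω) /
            ∏ l ∈ Finset.Ico i (t + 1), (1 + (Real.exp 1 - 1) * cPAAPA m l) ^ m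
        | ℱ t] ≤ᵐ[μ]
        fun ω =>
          Real.exp (d t ω) /
            ∏ l ∈ Finset.Ico i t, (1 + (Real.exp 1 - 1) * cPAAPA m l) ^ m) ∧
    (∃ X : Ω → ℝ, Integrable X μ ∧
      ∀ᵐ ω ∂μ, 0 ≤ X ω ∧
        Tendsto (fun t : ℕ =>
            Real.exp (d t ω) /
              ∏ l ∈ Finset.Ico i t, (1 + (Real.exp 1 - 1) * cPAAPA m l) ^ m)
          atTop (nhds (X ω))) ∧
    (∃ C : ℝ, 0 < C ∧ ∃ T : ℕ, ∀ t, T ≤ t →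
      ∑ l ∈ Finset.Ico i t, Real.log (1 + (Real.exp 1 - 1) * cPAAPA m l) ≤
        C * Real.log t) := by
  -- Notation
  set b : ℕ → ℝ := fun l => (1 + (Real.exp 1 - 1) * cPAAPA m l) ^ m with hb
  set P : ℕ → ℝ := fun t => ∏ l ∈ Finset.Ico i t, b l with hP
  set W : ℕ → Ω → ℝ := fun t ω => Real.exp (d t ω) / P t with hW
  suffices H : (∀ t, i ≤ t → (0 ≤ᵐ[μ] W t) ∧ Integrable (W t) μ ∧
      μ[W (t+1) | ℱ t] ≤ᵐ[μ] W t) ∧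
      (∃ X : Ω → ℝ, Integrable X μ ∧ ∀ᵐ ω ∂μ, 0 ≤ X ω ∧
        Tendsto (fun t : ℕ => W t ω) atTop (nhds (X ω))) ∧
      (∃ C : ℝ, 0 < C ∧ ∃ T : ℕ, ∀ t, T ≤ t →
        ∑ l ∈ Finset.Ico i t, Real.log (1 + (Real.exp 1 - 1) * cPAAPA m l) ≤
          C * Real.log t) by
    simpa only [hW, hP, hb] using H
  have hPpos : ∀ t, 0 < P t := by
    intro t
    refine Finset.prod_pos fun l hl => ?_
    exact base_pos hm (le_trans hi (Finset.mem_Ico.1 hl).1)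
  have hWpos : ∀ t ω, 0 < W t ω := fun t ω => div_pos (Real.exp_pos _) (hPpos t)
  -- measurability
  have hWmeas : ∀ t, StronglyMeasurable[ℱ t] (W t) := by
    intro t
    exact (((hadapted t).exp).div_const (P t)).stronglyMeasurable
  -- integrability
  have hWint : ∀ t, i ≤ t → Integrable (W t) μ := by
    intro t ht
    refine Integrable.mono' (integrable_const (Real.exp (2 * (m:ℝ) * t) / P t))
      (((hWmeas t).mono (ℱ.le t)).aestronglyMeasurable) ?_
    filter_upwards [hbound t ht] with ω hω
    have hp := hPpos t
    rw [Real.norm_eq_abs, abs_of_pos (hWpos t ω)]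
    show Real.exp (d t ω) / P t ≤ _
    exact (div_le_div_iff_of_pos_right hp).2 (Real.exp_le_exp.2 hω)
  -- supermartingale step
  have hkey : ∀ t, i ≤ t → μ[W (t+1) | ℱ t] ≤ᵐ[μ] W t := by
    intro t ht
    have hti : i ≤ t + 1 := le_trans ht (Nat.le_succ t)
    have hapos : 0 < b t := base_pos hm (le_trans hi ht)
    have hPsucc : P (t+1) = P t * b t := Finset.prod_Ico_succ_top ht _
    have hfg : W (t+1) = (fun ω => W t ω / b t) * (fun ω => Real.exp (d (t+1) ω - d t ω)) := by
      funext ω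
      simp only [Pi.mul_apply, hW, hPsucc, Real.exp_sub]
      have h1 := (hPpos t).ne'
      have h2 := (Real.exp_pos (d t ω)).ne'
      field_simp
    have hgmeas : Measurable (fun ω => Real.exp (d (t+1) ω - d t ω)) := by
      exact (((hadapted (t+1)).mono (ℱ.le _) le_rfl : Measurable (d (t+1))).sub
        ((hadapted t).mono (ℱ.le _) le_rfl : Measurable (d t))).exp
    have hgint : Integrable (fun ω => Real.exp (d (t+1) ω - d t ω)) μ := by
      refine Integrable.mono' (integrable_const (Real.exp (2*(m:ℝ)*(t+1))))
        hgmeas.aestronglyMeasurable ?_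
      filter_upwards [hbound (t+1) hti, hnonneg t ht] with ω h1 h2
      rw [Real.norm_eq_abs, abs_of_pos (Real.exp_pos _)]
      apply Real.exp_le_exp.2
      have h2' : (0:ℝ) ≤ d t ω := h2
      push_cast at h1 ⊢
      linarith
    have hfmeas : StronglyMeasurable[ℱ t] (fun ω => W t ω / b t) := by
      exact (((hWmeas t).measurable).div_const (b t)).stronglyMeasurable
    have hfgint : Integrable ((fun ω => W t ω / b t) * fun ω => Real.exp (d (t+1) ω - d t ω)) μ := by
      rw [← hfg]; exact hWint (t+1) hti
    have hpull := condExp_mul_of_stronglyMeasurable_left hfmeas hfgint hgint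
    have heq : μ[W (t+1)|ℱ t] = μ[(fun ω => W t ω / b t) * fun ω => Real.exp (d (t+1) ω - d t ω)|ℱ t] := by
      rw [← hfg]
    rw [heq]
    refine hpull.le.trans ?_
    filter_upwards [hmgf t ht] with ω hω
    have hWa : 0 ≤ W t ω / b t := (div_nonneg (hWpos t ω).le hapos.le)
    calc (W t ω / b t) * (μ[fun ω => Real.exp (d (t+1) ω - d t ω)|ℱ t]) ω
        ≤ (W t ω / b t) * b t := mul_le_mul_of_nonneg_left hω hWa
      _ = W t ω := div_mul_cancel₀ _ hapos.ne'
  refine ⟨fun t ht => ⟨Eventually.of_forall fun ω => (hWpos t ω).le, hWint t ht, hkey t ht⟩, ?_, ?_⟩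
  · -- a.s. convergence via supermartingale convergence
    set 𝒢 : Filtration ℕ m0 :=
      ⟨fun n => ℱ (i + n), fun n n' h => ℱ.mono (by omega), fun n => ℱ.le _⟩ with h𝒢
    set f : ℕ → Ω → ℝ := fun n => W (i + n) with hf
    have hadp : StronglyAdapted 𝒢 f := fun n => hWmeas (i + n)
    have hfint : ∀ n, Integrable (f n) μ := fun n => hWint _ (Nat.le_add_right i n)
    have hsuper : Supermartingale f 𝒢 μ := by
      refine supermartingale_nat hadp hfint fun n => ?_
      exact hkey (i + n) (Nat.le_add_right i n)
    set R : ℝ≥0∞ := ENNReal.ofReal (∫ ω, f 0 ω ∂μ) with hR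
    have hbdd : ∀ n, eLpNorm (f n) 1 μ ≤ R := by
      intro n
      have h1 : eLpNorm (f n) 1 μ = ENNReal.ofReal (∫ ω, ‖f n ω‖ ∂μ) := by
        rw [eLpNorm_one_eq_lintegral_enorm,
          ← ofReal_integral_norm_eq_lintegral_enorm (hfint n)]
      have h2 : (∫ ω, ‖f n ω‖ ∂μ) = ∫ ω, f n ω ∂μ := by
        refine integral_congr_ae (Eventually.of_forall fun ω => ?_)
        show ‖f n ω‖ = f n ω
        rw [Real.norm_eq_abs, abs_of_pos (hWpos _ ω)]
      have h3 : (∫ ω, f n ω ∂μ) ≤ ∫ ω, f 0 ω ∂μ := by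
        have := hsuper.setIntegral_le (Nat.zero_le n) (MeasurableSet.univ)
        simpa [setIntegral_univ] using this
      rw [h1, h2]
      exact ENNReal.ofReal_le_ofReal h3
    have hsub : Submartingale (-f) 𝒢 μ := hsuper.neg
    have hbdd' : ∀ n, eLpNorm ((-f) n) 1 μ ≤ R := by
      intro n
      simpa using hbdd n
    have htend := hsub.ae_tendsto_limitProcess hbdd'
    have hLint : Integrable (𝒢.limitProcess (-f) μ) μ :=
      memLp_one_iff_integrable.1 (hsub.memLp_limitProcess hbdd')
    refine ⟨fun ω => -(𝒢.limitProcess (-f) μ ω), hLint.neg, ?_⟩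
    filter_upwards [htend] with ω hω
    have h1 : Tendsto (fun n => W (i + n) ω) atTop
        (nhds (-(𝒢.limitProcess (-f) μ ω))) := by
      have := hω.neg
      simpa [hf] using this
    constructor
    · exact ge_of_tendsto' h1 fun n => (hWpos _ ω).le
    · have h2 : Tendsto (fun n => W (n + i) ω) atTop
          (nhds (-(𝒢.limitProcess (-f) μ ω))) := by
        simpa [add_comm] using h1
      exact (tendsto_add_atTop_iff_nat i).1 h2
  · -- logarithmic sum bound
    set K : ℝ := (Real.exp 1 - 1) * (2 * (m:ℝ) + 1) with hK
    have hKpos : 0 < K := by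
      have := e1_pos
      have h1 : (1:ℝ) ≤ m := by exact_mod_cast hm
      positivity
    refine ⟨2 * K, by positivity, 3, fun t ht => ?_⟩
    have htR : (3:ℝ) ≤ t := by exact_mod_cast ht
    have hlogt : 1 ≤ Real.log t := by
      rw [Real.le_log_iff_exp_le (by linarith)]
      have := Real.exp_one_lt_d9
      linarith
    have step1 : ∑ l ∈ Finset.Ico i t, Real.log (1 + (Real.exp 1 - 1) * cPAAPA m l)
        ≤ ∑ l ∈ Finset.Ico i t, K * (l:ℝ)⁻¹ := by
      refine Finset.sum_le_sum fun l hl => ?_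
      have hil : 1 ≤ l := le_trans hi (Finset.mem_Ico.1 hl).1
      have hlR : (1:ℝ) ≤ l := by exact_mod_cast hil
      have h1 := Real.log_le_sub_one_of_pos
        (lt_of_lt_of_le zero_lt_one (base_one_le hm hil))
      have h2 : (Real.exp 1 - 1) * cPAAPA m l ≤ K * (l:ℝ)⁻¹ := by
        rw [hK, mul_assoc]
        refine mul_le_mul_of_nonneg_left ?_ e1_pos.le
        have := cPAAPA_le hm hil
        rw [div_eq_mul_inv] at this
        exact this
      calc Real.log (1 + (Real.exp 1 - 1) * cPAAPA m l)
          ≤ (1 + (Real.exp 1 - 1) * cPAAPA m l) - 1 := h1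
        _ = (Real.exp 1 - 1) * cPAAPA m l := by ring
        _ ≤ K * (l:ℝ)⁻¹ := h2
    have step2 : ∑ l ∈ Finset.Ico i t, K * (l:ℝ)⁻¹ ≤ K * (1 + Real.log t) := by
      rw [← Finset.mul_sum]
      refine mul_le_mul_of_nonneg_left ?_ hKpos.le
      have hsub : Finset.Ico i t ⊆ Finset.Icc 1 t := by
        intro l hl
        rcases Finset.mem_Ico.1 hl with ⟨h1, h2⟩
        exact Finset.mem_Icc.2 ⟨le_trans hi h1, h2.le⟩
      have h4 : ∑ l ∈ Finset.Ico i t, (l:ℝ)⁻¹ ≤ ∑ l ∈ Finset.Icc 1 t, (l:ℝ)⁻¹ :=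
        Finset.sum_le_sum_of_subset_of_nonneg hsub fun l _ _ => by positivity
      have h5 : ∑ l ∈ Finset.Icc 1 t, (l:ℝ)⁻¹ = (harmonic t : ℝ) := by
        rw [harmonic_eq_sum_Icc]
        push_cast
        rfl
      have h6 := harmonic_le_one_add_log t
      linarith
    calc ∑ l ∈ Finset.Ico i t, Real.log (1 + (Real.exp 1 - 1) * cPAAPA m l)
        ≤ K * (1 + Real.log t) := le_trans step1 step2
      _ ≤ 2 * K * Real.log t := by nlinarith
end
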